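/- arXiv:2411.02213 — 3 statements merged into one kernel-verified Lean document; each statement's English description precedes it below -/
import Mathlib

section
/- The derivative at ε = 0 of the curve ε ↦ R^{p+εv} of reflections equals 2(t + t*), where t(x) = (⟨x,p⟩/⟨p,p⟩)v and t*(x) = (⟨x,v⟩/⟨p,p⟩)p. -/
/-- The derivative at `ε = 0` of the curve `ε ↦ R^{p+εv}` of reflections
equals `2(t + t*)`, where `t(x) = (⟨x,p⟩/⟨p,p⟩)v` and `t*(x) = (⟨x,v⟩/⟨p,p⟩)p`; the
derivative is taken in the real normed space of continuous ℂ-linear endomorphisms. -/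
theorem deriv_of_reflection_curve
    (V : Type*) [NormedAddCommGroup V] [NormedSpace ℂ V] [FiniteDimensional ℂ V]
    (B : V → V → ℂ)
    (hadd : ∀ x y z : V, B (x + y) z = B x z + B y z)
    (hsmul : ∀ (a : ℂ) (x y : V), B (a • x) y = a * B x y)
    (hconj : ∀ x y : V, B x y = starRingEnd ℂ (B y x))
    (p v : V) (hp : B p p ≠ 0) (hv : B v p = 0)
    (R : ℝ → (V →L[ℂ] V))
    (hR : ∀ (ε : ℝ) (x : V), R ε x =
      (2 * (B x (p + (ε : ℂ) • v) / B (p + (ε : ℂ) • v) (p + (ε : ℂ) • v)))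
        • (p + (ε : ℂ) • v) - x)
    (t ts : V →L[ℂ] V)
    (ht : ∀ x, t x = (B x p / B p p) • v)
    (hts : ∀ x, ts x = (B x v / B p p) • p) :
    HasDerivAt R ((2 : ℝ) • (t + ts)) 0 := by
  -- second-argument linearity
  have hadd2 : ∀ x y z : V, B x (y + z) = B x y + B x z := by
    intro x y z
    rw [hconj, hadd, map_add, ← hconj, ← hconj]
  have hsmul2 : ∀ (a : ℂ) (x y : V), B x (a • y) = (starRingEnd ℂ a) * B x y := by
    intro a x y
    rw [hconj, hsmul, map_mul, ← hconj]
  have hpv : B p v = 0 := by rw [hconj, hv, map_zero]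
  -- continuous linear functionals
  let φp : V →ₗ[ℂ] ℂ :=
    { toFun := fun x => B x p, map_add' := fun x y => hadd x y p,
      map_smul' := fun a x => hsmul a x p }
  let φv : V →ₗ[ℂ] ℂ :=
    { toFun := fun x => B x v, map_add' := fun x y => hadd x y v,
      map_smul' := fun a x => hsmul a x v }
  let Fp := LinearMap.toContinuousLinearMap φp
  let Fv := LinearMap.toContinuousLinearMap φv
  let A : V →L[ℂ] V := Fp.smulRight p
  let Bm : V →L[ℂ] V := Fp.smulRight v
  let Cm : V →L[ℂ] V := Fv.smulRight p
  let Dm : V →L[ℂ] V := Fv.smulRight v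
  have hRfun : R = fun ε : ℝ =>
      (2 / (B p p + (ε : ℂ) ^ 2 * B v v)) •
        (A + ε • Bm + ε • Cm + (ε ^ 2) • Dm) - 1 := by
    funext ε
    ext x
    have hnum : B x (p + (ε : ℂ) • v) = B x p + (ε : ℂ) * B x v := by
      rw [hadd2, hsmul2]; simp
    have hden : B (p + (ε : ℂ) • v) (p + (ε : ℂ) • v) = B p p + (ε : ℂ) ^ 2 * B v v := by
      simp only [hadd, hadd2, hsmul, hsmul2, hpv, hv]
      simp
      ring
    rw [hR, hnum, hden]
    simp only [ContinuousLinearMap.sub_apply, ContinuousLinearMap.smul_apply,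
      ContinuousLinearMap.add_apply, ContinuousLinearMap.one_apply,
      ContinuousLinearMap.coe_smul', Pi.smul_apply]
    have hA : A x = B x p • p := rfl
    have hB : Bm x = B x p • v := rfl
    have hC : Cm x = B x v • p := rfl
    have hD : Dm x = B x v • v := rfl
    rw [hA, hB, hC, hD]
    match_scalars <;> (try simp only [Complex.coe_algebraMap]) <;> push_cast <;> ring
  rw [hRfun]
  -- derivative of the scalar part
  have hid : HasDerivAt (fun ε : ℝ => (ε : ℂ)) 1 0 := by
    simpa using (hasDerivAt_id (0:ℝ)).ofReal_comp
  have hsq : HasDerivAt (fun ε : ℝ => (ε : ℂ) ^ 2) 0 0 := by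
    have := hid.mul hid
    simpa [← pow_two, Pi.pow_def] using this
  have hden : HasDerivAt (fun ε : ℝ => B p p + (ε : ℂ) ^ 2 * B v v) 0 0 := by
    simpa using (hsq.mul_const (B v v)).const_add (B p p)
  have hden0 : B p p + ((0 : ℝ) : ℂ) ^ 2 * B v v ≠ 0 := by simpa using hp
  have hf : HasDerivAt (fun ε : ℝ => 2 / (B p p + (ε : ℂ) ^ 2 * B v v)) 0 0 := by
    have := (hasDerivAt_const (0 : ℝ) (2 : ℂ)).div hden hden0
    simpa [Pi.add_def, Pi.div_def] using this
  -- derivative of the map part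
  have hidR : HasDerivAt (fun ε : ℝ => ε) 1 0 := hasDerivAt_id 0
  have hg : HasDerivAt
      (fun ε : ℝ => A + ε • Bm + ε • Cm + (ε ^ 2) • Dm) (Bm + Cm) 0 := by
    have h1 : HasDerivAt (fun ε : ℝ => ε • Bm) ((1:ℝ) • Bm) 0 := hidR.smul_const Bm
    have h2 : HasDerivAt (fun ε : ℝ => ε • Cm) ((1:ℝ) • Cm) 0 := hidR.smul_const Cm
    have h3 : HasDerivAt (fun ε : ℝ => (ε ^ 2) • Dm)
        (((2:ℕ) * (0:ℝ) ^ 1) • Dm) 0 := (hasDerivAt_pow 2 0).smul_const Dm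
    have := (((hasDerivAt_const 0 A).add h1).add h2).add h3
    simpa [Pi.add_def, Pi.div_def] using this
  have hprod := hf.smul hg
  have hfinal := hprod.sub_const 1
  simp only [Pi.smul_apply'] at hfinal
  refine HasDerivAt.congr_deriv hfinal ?_
  ext x
  simp only [ContinuousLinearMap.smul_apply, ContinuousLinearMap.add_apply,
    ht x, hts x]
  have hB : Bm x = B x p • v := rfl
  have hC : Cm x = B x v • p := rfl
  have hA : A x = B x p • p := rfl
  simp only [zero_smul, add_smul, smul_add, zero_add, hB, hC]
  match_scalars <;> (try simp only [Complex.coe_algebraMap]) <;> push_cast <;> ring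
end

section
/- There is no relation R^{p₅}R^{p₄}R^{p₃}R^{p₂}R^{p₁} = Id in SU(2,1) with p₁ positive and p₂,p₃,p₄,p₅ negative and all points pairwise non-orthogonal with pairwise tances ≠ 1: if R^{p₅}R^{p₄}R^{p₃}R^{p₂}R^{p₁} = Id then tr(R^{p₃}R^{p₂}R^{p₁}) = tr(R^{p₄}R^{p₅}), which is real and positive, contradicting the sign configuration. Formally: if σp₁ = +1, σp₂ = σp₃ = −1 and tr(R^{p₃}R^{p₂}R^{p₁}) is a real number with Re(tr) > −1, and p₁,p₂,p₃ are linearly independent, then a contradiction follows from det of the Gram matrix being negative. -/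
/-- The standard Hermitian form of signature `−++` on `ℂ³`. -/
noncomputable def hermForm (x y : Fin 3 → ℂ) : ℂ :=
  -(x 0 * star (y 0)) + x 1 * star (y 1) + x 2 * star (y 2)

/-- Auxiliary denominator-clearing identity. -/
lemma gen_clear {A B C : ℂ} (hA : A ≠ 0) (hB : B ≠ 0) (hC : C ≠ 0)
    (u v w h1 h2 h3 x1 x2 x3 d : ℂ) :
    ((2 * ((2 * ((2 * (h1 / A) * u - h2) / B) * w - (2 * (h1 / A) * v - h3)) / C)) * x3
      - ((2 * ((2 * (h1 / A) * u - h2) / B)) * x2 - ((2 * (h1 / A)) * x1 - d))) * (A * B * C)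
    = (8 * h1 * u * w - 4 * A * h2 * w - 4 * B * h1 * v + 2 * A * B * h3) * x3
      - (4 * h1 * u - 2 * A * h2) * C * x2 + 2 * h1 * B * C * x1 - d * A * B * C := by
  set k1 := h1 / A with hk1
  set k2 := (2 * k1 * u - h2) / B with hk2
  set k3 := (2 * k2 * w - (2 * k1 * v - h3)) / C with hk3
  have E1 : h1 = k1 * A := by rw [hk1, div_mul_cancel₀ _ hA]
  have E2 : h2 = 2 * k1 * u - k2 * B := by rw [hk2, div_mul_cancel₀ _ hB]; ring
  have E3 : h3 = k3 * C - 2 * k2 * w + 2 * k1 * v := by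
    rw [hk3, div_mul_cancel₀ _ hC]; ring
  rw [E1, E2, E3]
  ring

/-- If `σp₁ = +1`, `σp₂ = σp₃ = −1`, `p₁,p₂,p₃` are linearly independent,
and the trace of `R^{p₃}R^{p₂}R^{p₁}` is a real number with real part `> −1`, then we
get a contradiction (since the Gram determinant must be negative). -/
theorem no_trace_right_of_line
    (p₁ p₂ p₃ : Fin 3 → ℂ)
    (h₁im : (hermForm p₁ p₁).im = 0) (h₁ : 0 < (hermForm p₁ p₁).re)
    (h₂im : (hermForm p₂ p₂).im = 0) (h₂ : (hermForm p₂ p₂).re < 0)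
    (h₃im : (hermForm p₃ p₃).im = 0) (h₃ : (hermForm p₃ p₃).re < 0)
    (hind : LinearIndependent ℂ ![p₁, p₂, p₃])
    (R₁ R₂ R₃ : (Fin 3 → ℂ) →ₗ[ℂ] (Fin 3 → ℂ))
    (hR₁ : ∀ x, R₁ x = (2 * (hermForm x p₁ / hermForm p₁ p₁)) • p₁ - x)
    (hR₂ : ∀ x, R₂ x = (2 * (hermForm x p₂ / hermForm p₂ p₂)) • p₂ - x)
    (hR₃ : ∀ x, R₃ x = (2 * (hermForm x p₃ / hermForm p₃ p₃)) • p₃ - x)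
    (htr_real : (LinearMap.trace ℂ (Fin 3 → ℂ) (R₃ ∘ₗ R₂ ∘ₗ R₁)).im = 0)
    (htr : -1 < (LinearMap.trace ℂ (Fin 3 → ℂ) (R₃ ∘ₗ R₂ ∘ₗ R₁)).re) :
    False := by
  have ha : hermForm p₁ p₁ ≠ 0 := fun h => by simp [h] at h₁
  have hb : hermForm p₂ p₂ ≠ 0 := fun h => by simp [h] at h₂
  have hc : hermForm p₃ p₃ ≠ 0 := fun h => by simp [h] at h₃
  -- the trace identity
  have KEY0 : (LinearMap.trace ℂ (Fin 3 → ℂ) (R₃ ∘ₗ R₂ ∘ₗ R₁)) *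
      (hermForm p₁ p₁ * hermForm p₂ p₂ * hermForm p₃ p₃) =
      8 * (star (hermForm p₁ p₃) * hermForm p₁ p₂ * hermForm p₂ p₃)
        - 4 * (hermForm p₁ p₁ * (hermForm p₂ p₃ * star (hermForm p₂ p₃))
             + hermForm p₂ p₂ * (hermForm p₁ p₃ * star (hermForm p₁ p₃))
             + hermForm p₃ p₃ * (hermForm p₁ p₂ * star (hermForm p₁ p₂)))
        + 3 * (hermForm p₁ p₁ * hermForm p₂ p₂ * hermForm p₃ p₃) := by
    have L1 : ∀ (c : ℂ) (u x y : Fin 3 → ℂ),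
        hermForm (c • u - x) y = c * hermForm u y - hermForm x y := by
      intro c u x y; simp [hermForm]; ring
    have comp : ∀ v : Fin 3 → ℂ, R₃ (R₂ (R₁ v)) =
        (2 * ((2 * ((2 * (hermForm v p₁ / hermForm p₁ p₁) * hermForm p₁ p₂ - hermForm v p₂)
                / hermForm p₂ p₂) * hermForm p₂ p₃
              - (2 * (hermForm v p₁ / hermForm p₁ p₁) * hermForm p₁ p₃ - hermForm v p₃))
            / hermForm p₃ p₃)) • p₃
        - ((2 * ((2 * (hermForm v p₁ / hermForm p₁ p₁) * hermForm p₁ p₂ - hermForm v p₂)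
              / hermForm p₂ p₂)) • p₂
          - ((2 * (hermForm v p₁ / hermForm p₁ p₁)) • p₁ - v)) := by
      intro v
      rw [hR₁, hR₂, hR₃]
      simp only [L1]
    have h0 : ∀ q, hermForm (fun j' => if j' = (0 : Fin 3) then (1:ℂ) else 0) q
        = -star (q 0) := by intro q; simp [hermForm]
    have h1 : ∀ q, hermForm (fun j' => if j' = (1 : Fin 3) then (1:ℂ) else 0) q
        = star (q 1) := by intro q; simp [hermForm]
    have h2 : ∀ q, hermForm (fun j' => if j' = (2 : Fin 3) then (1:ℂ) else 0) q
        = star (q 2) := by intro q; simp [hermForm]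
    rw [LinearMap.trace_eq_matrix_trace ℂ (Pi.basisFun ℂ (Fin 3))]
    simp only [Matrix.trace, LinearMap.toMatrix, Fin.sum_univ_three, Matrix.diag,
      LinearEquiv.trans_apply, LinearMap.toMatrix'_apply, LinearMap.comp_apply,
      LinearEquiv.arrowCongr_apply, Pi.basisFun_equivFun, LinearEquiv.refl_apply,
      Pi.basisFun_apply, LinearEquiv.refl_symm]
    simp only [show ∀ i : Fin 3, (Pi.single i (1:ℂ) : Fin 3 → ℂ) = fun j' => if j' = i then 1 else 0
      from fun i => funext fun j => Pi.single_apply i 1 j]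
    rw [comp, comp, comp]
    simp only [Pi.sub_apply, Pi.smul_apply, smul_eq_mul, h0, h1, h2]
    rw [add_mul, add_mul, gen_clear ha hb hc, gen_clear ha hb hc, gen_clear ha hb hc]
    norm_num
    simp only [hermForm, Complex.star_def, map_add, map_mul, map_neg, map_sub,
      Complex.conj_conj, star_star]
    ring
  -- the Gram determinant identity
  set d : ℂ := p₁ 0 * (p₂ 1 * p₃ 2 - p₂ 2 * p₃ 1) - p₁ 1 * (p₂ 0 * p₃ 2 - p₂ 2 * p₃ 0)
      + p₁ 2 * (p₂ 0 * p₃ 1 - p₂ 1 * p₃ 0) with hd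
  have GRAM : hermForm p₁ p₁ * hermForm p₂ p₂ * hermForm p₃ p₃
      + hermForm p₁ p₂ * hermForm p₂ p₃ * star (hermForm p₁ p₃)
      + hermForm p₁ p₃ * star (hermForm p₁ p₂) * star (hermForm p₂ p₃)
      - hermForm p₁ p₁ * (hermForm p₂ p₃ * star (hermForm p₂ p₃))
      - hermForm p₂ p₂ * (hermForm p₁ p₃ * star (hermForm p₁ p₃))
      - hermForm p₃ p₃ * (hermForm p₁ p₂ * star (hermForm p₁ p₂))
      = -(d * star d) := by
    rw [hd]
    simp only [hermForm, Complex.star_def, map_add, map_mul, map_neg, map_sub,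
      Complex.conj_conj, star_star]
    ring
  have e1 := congrArg Complex.re KEY0
  have e2 := congrArg Complex.re GRAM
  simp only [Complex.add_re, Complex.sub_re, Complex.mul_re, Complex.mul_im,
    Complex.add_im, Complex.sub_im, Complex.neg_re, Complex.neg_im, Complex.one_re,
    Complex.one_im, Complex.re_ofNat, Complex.im_ofNat, Complex.star_def,
    Complex.conj_re, Complex.conj_im, h₁im, h₂im, h₃im, htr_real, mul_zero, zero_mul,
    sub_zero, zero_sub, add_zero, zero_add, neg_zero, neg_neg] at e1 e2
  have key : ((LinearMap.trace ℂ (Fin 3 → ℂ) (R₃ ∘ₗ R₂ ∘ₗ R₁)).re + 1) *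
      ((hermForm p₁ p₁).re * ((hermForm p₂ p₂).re * (hermForm p₃ p₃).re)) =
      -4 * (d.re ^ 2 + d.im ^ 2) := by
    linear_combination e1 + 4 * e2
  have pos : 0 < ((LinearMap.trace ℂ (Fin 3 → ℂ) (R₃ ∘ₗ R₂ ∘ₗ R₁)).re + 1) *
      ((hermForm p₁ p₁).re * ((hermForm p₂ p₂).re * (hermForm p₃ p₃).re)) :=
    mul_pos (by linarith) (mul_pos h₁ (mul_pos_of_neg_of_neg h₂ h₃))
  nlinarith [sq_nonneg d.re, sq_nonneg d.im]
end

section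
/- Fix a real number s satisfying the equation s₁²s₂ + s₁s₂² − 2s₁s₂s + s² + (2Re κ)s₁s₂ + (Im κ)² = 0 and the inequalities σ₁σ₂s₁ > max(0, σ₁σ₂), σ₂σ₃s₂ > max(0, σ₂σ₃), σ₁σ₂σ₃(2Re κ + 1) < 0, where σᵢ ∈ {±1} with at most one +1. Then the Hermitian 3×3 matrix G with g₁₁ = σ₁, g₂₂ = σ₂, g₃₃ = σ₃, g₁₂ = g₂₁ = √(σ₁σ₂s₁), g₂₃ = g₃₂ = √(σ₂σ₃s₂), g₁₃ = σ₁σ₂σ₃(s − i·Im κ)/(√(σ₁σ₂s₁)√(σ₂σ₃s₂)), g₃₁ = conj(g₁₃), has negative determinant. -/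
open Complex

/-- Given signs `σᵢ ∈ {±1}` with at most one `+1`, `κ ∈ ℂ`, and reals
`s₁, s₂, s` satisfying the surface equation and the inequalities, the candidate Gram
matrix `G` has negative (real) determinant. -/
theorem candidate_gram_matrix_det_neg
    (σ₁ σ₂ σ₃ : ℝ)
    (hσ₁ : σ₁ = 1 ∨ σ₁ = -1) (hσ₂ : σ₂ = 1 ∨ σ₂ = -1) (hσ₃ : σ₃ = 1 ∨ σ₃ = -1)
    (hone : ¬(σ₁ = 1 ∧ σ₂ = 1) ∧ ¬(σ₁ = 1 ∧ σ₃ = 1) ∧ ¬(σ₂ = 1 ∧ σ₃ = 1))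
    (κ : ℂ) (s₁ s₂ s : ℝ)
    (heq : s₁ ^ 2 * s₂ + s₁ * s₂ ^ 2 - 2 * s₁ * s₂ * s + s ^ 2
      + (2 * κ.re) * s₁ * s₂ + (κ.im) ^ 2 = 0)
    (h₁ : σ₁ * σ₂ * s₁ > max 0 (σ₁ * σ₂))
    (h₂ : σ₂ * σ₃ * s₂ > max 0 (σ₂ * σ₃))
    (h₃ : σ₁ * σ₂ * σ₃ * (2 * κ.re + 1) < 0)
    (g₁₂ g₂₃ : ℝ) (hg₁₂ : g₁₂ = Real.sqrt (σ₁ * σ₂ * s₁))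
    (hg₂₃ : g₂₃ = Real.sqrt (σ₂ * σ₃ * s₂))
    (g₁₃ : ℂ)
    (hg₁₃ : g₁₃ = ((σ₁ * σ₂ * σ₃ : ℝ) : ℂ) * ((s : ℂ) - (κ.im : ℂ) * Complex.I)
      / ((g₁₂ : ℂ) * (g₂₃ : ℂ)))
    (G : Matrix (Fin 3) (Fin 3) ℂ)
    (hG : G = !![(σ₁ : ℂ), (g₁₂ : ℂ), g₁₃;
                 (g₁₂ : ℂ), (σ₂ : ℂ), (g₂₃ : ℂ);
                 starRingEnd ℂ g₁₃, (g₂₃ : ℂ), (σ₃ : ℂ)]) :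
    G.det.im = 0 ∧ G.det.re < 0 := by
  have ha0 : 0 < σ₁ * σ₂ * s₁ := lt_of_le_of_lt (le_max_left _ _) h₁
  have hb0 : 0 < σ₂ * σ₃ * s₂ := lt_of_le_of_lt (le_max_left _ _) h₂
  have hapos : 0 < g₁₂ := hg₁₂ ▸ Real.sqrt_pos.mpr ha0
  have hbpos : 0 < g₂₃ := hg₂₃ ▸ Real.sqrt_pos.mpr hb0
  have ha2 : (g₁₂:ℂ)^2 = ((σ₁:ℂ) * σ₂ * s₁) := by
    rw [hg₁₂, ← Complex.ofReal_pow, Real.sq_sqrt ha0.le]; push_cast; ring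
  have hb2 : (g₂₃:ℂ)^2 = ((σ₂:ℂ) * σ₃ * s₂) := by
    rw [hg₂₃, ← Complex.ofReal_pow, Real.sq_sqrt hb0.le]; push_cast; ring
  have ha : (g₁₂:ℂ) ≠ 0 := by exact_mod_cast hapos.ne'
  have hb : (g₂₃:ℂ) ≠ 0 := by exact_mod_cast hbpos.ne'
  have hs1 : σ₁^2 = 1 := by rcases hσ₁ with h|h <;> rw [h] <;> norm_num
  have hs2 : σ₂^2 = 1 := by rcases hσ₂ with h|h <;> rw [h] <;> norm_num
  have hs3 : σ₃^2 = 1 := by rcases hσ₃ with h|h <;> rw [h] <;> norm_num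
  have heqC : (s₁:ℂ) ^ 2 * s₂ + s₁ * s₂ ^ 2 - 2 * s₁ * s₂ * s + s ^ 2
      + (2 * (κ.re:ℂ)) * s₁ * s₂ + (κ.im:ℂ) ^ 2 = 0 := by exact_mod_cast heq
  have hs1C : (σ₁:ℂ)^2 = 1 := by exact_mod_cast hs1
  have hs2C : (σ₂:ℂ)^2 = 1 := by exact_mod_cast hs2
  have hs3C : (σ₃:ℂ)^2 = 1 := by exact_mod_cast hs3
  have hdet : G.det = ((σ₁*σ₂*σ₃*(2*κ.re+1) : ℝ) : ℂ) := by
    rw [hG, Matrix.det_fin_three]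
    rw [hg₁₃]
    simp only [Matrix.of_apply, Matrix.cons_val', Matrix.cons_val_zero, Matrix.cons_val_one,
      Matrix.cons_val_two, Matrix.empty_val', Matrix.cons_val_fin_one, Matrix.head_cons,
      Matrix.tail_cons, Matrix.head_fin_const]
    simp only [map_div₀, map_mul, map_sub, Complex.conj_ofReal, Complex.conj_I]
    push_cast
    field_simp
    ring_nf
    simp only [Complex.I_sq]
    ring_nf
    linear_combination ((2*(σ₁:ℂ)*σ₂*σ₃*((s:ℂ)-(κ.re:ℂ))*(g₂₃:ℂ)^2
        - (σ₁:ℂ)*(g₂₃:ℂ)^4 - (σ₃:ℂ)*((g₁₂:ℂ)^2+(σ₁:ℂ)*σ₂*s₁)*(g₂₃:ℂ)^2)) * ha2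
      + ((2*(σ₁:ℂ)*σ₂*σ₃*((s:ℂ)-(κ.re:ℂ))*((σ₁:ℂ)*σ₂*s₁)
        - (σ₁:ℂ)*((σ₁:ℂ)*σ₂*s₁)*((g₂₃:ℂ)^2+(σ₂:ℂ)*σ₃*s₂) - (σ₃:ℂ)*((σ₁:ℂ)*σ₂*s₁)^2)) * hb2
      - ((σ₁:ℂ)^2*(σ₂:ℂ)^3*(σ₃:ℂ)^2) * heqC
  rw [hdet]
  constructor
  · simp
  · rw [Complex.ofReal_re]
    exact h₃
end
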